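/- Let m ≥ 1, let x : Fin m → EuclideanSpace ℝ (Fin 3) be a point configuration, let R be a 3×3 real matrix with R * Rᵀ = 1, and let v ∈ ℝ³. Then the frame set of the transformed configuration equals the left translate of the original frame set: F(fun i => R.mulVec (x i) + v) = { (R * Q, R.mulVec s + v) : (Q, s) ∈ F(x) }. -/

import Mathlib

open Matrix

/-- Reinterpret a plain vector `Fin 3 → ℝ` as a point of `EuclideanSpace ℝ (Fin 3)`
(the identity map on the underlying data). -/
def toE (v : Fin 3 → ℝ) : EuclideanSpace ℝ (Fin 3) := WithLp.toLp 2 v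

/-- The centroid of a point configuration. -/
noncomputable def centroid {m : ℕ} (x : Fin m → EuclideanSpace ℝ (Fin 3)) :
    EuclideanSpace ℝ (Fin 3) :=
  (m : ℝ)⁻¹ • ∑ i, x i

/-- The outer product `p pᵀ` of a vector with itself. -/
def outerSq (p : EuclideanSpace ℝ (Fin 3)) : Matrix (Fin 3) (Fin 3) ℝ :=
  Matrix.of fun a b => p a * p b

/-- The covariance matrix of a point configuration. -/
noncomputable def cov {m : ℕ} (x : Fin m → EuclideanSpace ℝ (Fin 3)) :
    Matrix (Fin 3) (Fin 3) ℝ :=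
  (m : ℝ)⁻¹ • ∑ i, outerSq (x i - centroid x)

/-- `lam` lists the eigenvalues of the symmetric matrix `C` in ascending order:
it is monotone and `C` is orthogonally diagonalized with diagonal `lam`. -/
def IsSortedEigs (C : Matrix (Fin 3) (Fin 3) ℝ) (lam : Fin 3 → ℝ) : Prop :=
  Monotone lam ∧ ∃ P : Matrix (Fin 3) (Fin 3) ℝ,
    P * Pᵀ = 1 ∧ C = P * Matrix.diagonal lam * Pᵀ

/-- The frame set of a point configuration: pairs `(Q, centroid x)` where the `j`-th column
of `Q` is a unit eigenvector of `cov x` for the `j`-th eigenvalue in ascending order. -/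
noncomputable def frameSet {m : ℕ} (x : Fin m → EuclideanSpace ℝ (Fin 3)) :
    Set (Matrix (Fin 3) (Fin 3) ℝ × EuclideanSpace ℝ (Fin 3)) :=
  { Qs | Qs.2 = centroid x ∧ ∃ lam : Fin 3 → ℝ, IsSortedEigs (cov x) lam ∧
      ∀ j : Fin 3, ‖toE (Qs.1ᵀ j)‖ = 1 ∧
        (cov x).mulVec (Qs.1ᵀ j) = lam j • Qs.1ᵀ j }


lemma Esum_apply {ι} (s : Finset ι) (f : ι → EuclideanSpace ℝ (Fin 3)) (a : Fin 3) :
    (∑ i ∈ s, f i) a = ∑ i ∈ s, f i a := by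
  simp

lemma centroid_map {m : ℕ} (hm : 1 ≤ m) (x : Fin m → EuclideanSpace ℝ (Fin 3))
    (R : Matrix (Fin 3) (Fin 3) ℝ) (v : EuclideanSpace ℝ (Fin 3)) :
    centroid (fun i => toE (R.mulVec (x i)) + v) = toE (R.mulVec (centroid x)) + v := by
  have hm0 : (m:ℝ) ≠ 0 := by positivity
  ext a
  simp only [centroid, toE, PiLp.toLp_apply, PiLp.add_apply, PiLp.smul_apply, Esum_apply,
    Matrix.mulVec, dotProduct, smul_eq_mul, Finset.mul_sum, Finset.sum_add_distrib]
  rw [Finset.sum_comm]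
  simp only [Finset.sum_const, Finset.card_univ, Fintype.card_fin, nsmul_eq_mul]
  rw [mul_add, inv_mul_cancel_left₀ hm0]
  congr 1
  rw [Finset.mul_sum]
  exact Finset.sum_congr rfl fun k _ => by rw [Finset.mul_sum]; exact Finset.sum_congr rfl fun i _ => by ring

lemma outerSq_mul (R : Matrix (Fin 3) (Fin 3) ℝ) (p : EuclideanSpace ℝ (Fin 3)) :
    outerSq (toE (R.mulVec p)) = R * outerSq p * Rᵀ := by
  ext a b
  simp only [outerSq, toE, PiLp.toLp_apply, Matrix.mul_apply, Matrix.of_apply, Matrix.transpose_apply,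
    Matrix.mulVec, dotProduct, Finset.sum_mul, Finset.mul_sum]
  exact Finset.sum_congr rfl fun k _ => Finset.sum_congr rfl fun l _ => by ring

lemma cov_map {m : ℕ} (hm : 1 ≤ m) (x : Fin m → EuclideanSpace ℝ (Fin 3))
    (R : Matrix (Fin 3) (Fin 3) ℝ) (v : EuclideanSpace ℝ (Fin 3)) :
    cov (fun i => toE (R.mulVec (x i)) + v) = R * cov x * Rᵀ := by
  have hdiff : ∀ i, (toE (R.mulVec (x i)) + v) - centroid (fun i => toE (R.mulVec (x i)) + v)
      = toE (R.mulVec (x i - centroid x)) := by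
    intro i
    rw [centroid_map hm x R v]
    ext a
    simp only [toE, PiLp.toLp_apply, PiLp.add_apply, PiLp.sub_apply, Pi.sub_apply, Matrix.mulVec, dotProduct, mul_sub,
      Finset.sum_sub_distrib]
    ring
  simp only [cov, hdiff, ← WithLp.ofLp_sub, outerSq_mul]
  rw [← Finset.sum_mul, ← Matrix.mul_sum]
  simp [Matrix.mul_smul, Matrix.smul_mul]

lemma norm_mulVecE (R : Matrix (Fin 3) (Fin 3) ℝ) (hRtR : Rᵀ * R = 1) (q : Fin 3 → ℝ) :
    ‖toE (R.mulVec q)‖ = ‖toE q‖ := by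
  have h : (R.mulVec q) ⬝ᵥ (R.mulVec q) = q ⬝ᵥ q := by
    rw [Matrix.dotProduct_mulVec, ← Matrix.mulVec_transpose, Matrix.mulVec_mulVec, hRtR,
      Matrix.one_mulVec]
  simp only [EuclideanSpace.norm_eq, toE, Real.norm_eq_abs, sq_abs]
  congr 1
  simpa [dotProduct, pow_two] using h

lemma col_mul (R Q : Matrix (Fin 3) (Fin 3) ℝ) (j : Fin 3) :
    ((R * Q)ᵀ) j = R.mulVec (Qᵀ j) := by
  funext b
  simp [Matrix.transpose_apply, Matrix.mul_apply, Matrix.mulVec, dotProduct]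

lemma frame_forward {m : ℕ} (hm : 1 ≤ m) (x : Fin m → EuclideanSpace ℝ (Fin 3))
    (R : Matrix (Fin 3) (Fin 3) ℝ) (hR : R * Rᵀ = 1) (v : EuclideanSpace ℝ (Fin 3))
    {Qs : Matrix (Fin 3) (Fin 3) ℝ × EuclideanSpace ℝ (Fin 3)} (h : Qs ∈ frameSet x) :
    (R * Qs.1, toE (R.mulVec Qs.2) + v) ∈ frameSet (fun i => toE (R.mulVec (x i)) + v) := by
  obtain ⟨hs, lam, ⟨hmono, P, hP, hdiag⟩, hcols⟩ := h
  have hRtR : Rᵀ * R = 1 := mul_eq_one_comm.mp hR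
  refine ⟨?_, lam, ⟨hmono, R * P, ?_, ?_⟩, ?_⟩
  · rw [centroid_map hm x R v, hs]
  · rw [Matrix.transpose_mul, Matrix.mul_assoc, ← Matrix.mul_assoc P, hP, Matrix.one_mul, hR]
  · rw [cov_map hm x R v, hdiag]
    simp only [Matrix.transpose_mul, Matrix.mul_assoc]
  · intro j
    have hcol : ((R * Qs.1)ᵀ) j = R.mulVec (Qs.1ᵀ j) := col_mul R Qs.1 j
    obtain ⟨hn, he⟩ := hcols j
    rw [cov_map hm x R v]
    refine ⟨by rw [hcol]; rw [norm_mulVecE R hRtR]; exact hn, ?_⟩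
    rw [hcol, Matrix.mulVec_mulVec]
    have : R * cov x * Rᵀ * R = R * cov x := by
      rw [Matrix.mul_assoc, hRtR, Matrix.mul_one]
    rw [this, ← Matrix.mulVec_mulVec, he, Matrix.mulVec_smul]

lemma Etrans (A : Matrix (Fin 3) (Fin 3) ℝ) (p : Fin 3 → ℝ) (w : EuclideanSpace ℝ (Fin 3)) :
    toE (A.mulVec (toE p + w)) = toE (A.mulVec p + A.mulVec w) := by
  ext a
  simp [toE, Matrix.mulVec, dotProduct, PiLp.add_apply, mul_add, Finset.sum_add_distrib]

lemma EsubE (a b : Fin 3 → ℝ) :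
    (toE a + -(toE b) : EuclideanSpace ℝ (Fin 3)) = toE (a - b) := rfl

/-- **Equivariance of the frame set.** If `R * Rᵀ = 1` and `v ∈ ℝ³`, the frame set of the
transformed configuration `i ↦ R (x i) + v` is exactly the left translate
`{(R * Q, R s + v) : (Q, s) ∈ F(x)}` of the frame set of `x`. -/
theorem frameSet_map_eq {m : ℕ} (hm : 1 ≤ m) (x : Fin m → EuclideanSpace ℝ (Fin 3))
    (R : Matrix (Fin 3) (Fin 3) ℝ) (hR : R * Rᵀ = 1) (v : EuclideanSpace ℝ (Fin 3)) :
    frameSet (fun i => toE (R.mulVec (x i)) + v) =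
      (fun Qs : Matrix (Fin 3) (Fin 3) ℝ × EuclideanSpace ℝ (Fin 3) =>
        (R * Qs.1, toE (R.mulVec Qs.2) + v)) '' frameSet x := by
  have hRtR : Rᵀ * R = 1 := mul_eq_one_comm.mp hR
  apply Set.Subset.antisymm
  · intro Qs h
    have hRT : Rᵀ * Rᵀᵀ = 1 := by rw [Matrix.transpose_transpose]; exact hRtR
    have h2 := frame_forward hm (fun i => toE (R.mulVec (x i)) + v) Rᵀ hRT
      (-(toE (Rᵀ.mulVec v))) h
    have hx : (fun i => toE (Rᵀ.mulVec ((fun i => toE (R.mulVec (x i)) + v) i))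
        + (-(toE (Rᵀ.mulVec v)))) = x := by
      funext i
      show toE (Rᵀ *ᵥ (toE (R *ᵥ x i) + v)) + -(toE (Rᵀ *ᵥ v)) = x i
      rw [Etrans, EsubE, add_sub_cancel_right, Matrix.mulVec_mulVec, hRtR, Matrix.one_mulVec]
      rfl
    rw [hx] at h2
    refine ⟨(Rᵀ * Qs.1, toE (Rᵀ.mulVec Qs.2) + -(toE (Rᵀ.mulVec v))), h2, ?_⟩
    have e3 : (toE (Rᵀ *ᵥ Qs.2) + -(toE (Rᵀ *ᵥ v)) : EuclideanSpace ℝ (Fin 3))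
        = toE (Rᵀ *ᵥ Qs.2 - Rᵀ *ᵥ v) := rfl
    have e4 : R *ᵥ (Rᵀ *ᵥ (Qs.2 : EuclideanSpace ℝ (Fin 3)) - Rᵀ *ᵥ v)
        = (fun a => Qs.2 a - v a) := by
      rw [Matrix.mulVec_sub, Matrix.mulVec_mulVec, Matrix.mulVec_mulVec, hR,
        Matrix.one_mulVec, Matrix.one_mulVec]
      rfl
    have e5 : toE (R *ᵥ toE (Rᵀ *ᵥ Qs.2 - Rᵀ *ᵥ v)) + v = Qs.2 := by
      show toE (R *ᵥ (Rᵀ *ᵥ Qs.2 - Rᵀ *ᵥ v)) + v = Qs.2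
      rw [e4]
      exact sub_add_cancel Qs.2 v
    show (R * (Rᵀ * Qs.1), toE (R *ᵥ ((toE (Rᵀ *ᵥ Qs.2) + -(toE (Rᵀ *ᵥ v)) : EuclideanSpace ℝ (Fin 3)))) + v) = Qs
    rw [e3, e5, ← Matrix.mul_assoc, hR, Matrix.one_mul]
  · rintro _ ⟨Qs, hQs, rfl⟩
    exact frame_forward hm x R hR v hQs
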